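/- Let A be an n×n complex matrix whose characteristic polynomial is ∏_{i=1}^{g} (X^{f_i} − 1) for positive integers f_1,…,f_g. Then for every positive integer N, the algebraic multiplicity of the eigenvalue 1 of A^N equals ∑_{i=1}^{g} gcd(f_i, N). -/

import Mathlib

open Polynomial Finset


lemma prodNthRoots {m : ℕ} (hm : 0 < m) {ζ : ℂ} (hζ : IsPrimitiveRoot ζ m) (g : ℂ → ℂ) :
    ∏ μ ∈ Polynomial.nthRootsFinset m (1 : ℂ), g μ = ∏ j ∈ Finset.range m, g (ζ ^ j) := by
  have : NeZero m := ⟨hm.ne'⟩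
  have himg : Polynomial.nthRootsFinset m (1 : ℂ) = (Finset.range m).image (ζ ^ ·) := by
    ext μ
    simp only [Finset.mem_image, Finset.mem_range, Polynomial.mem_nthRootsFinset hm (1 : ℂ)]
    constructor
    · intro h1
      obtain ⟨i, hi, he⟩ := hζ.eq_pow_of_pow_eq_one h1
      exact ⟨i, hi, he⟩
    · rintro ⟨i, -, rfl⟩
      rw [← pow_mul, mul_comm, pow_mul, hζ.pow_eq_one, one_pow]
  rw [himg, Finset.prod_image]
  intro i hi j hj hij
  exact hζ.pow_inj (Finset.mem_range.1 hi) (Finset.mem_range.1 hj) hij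

lemma prodPowPeriodic (g : ℂ → ℂ) (ξ : ℂ) {m : ℕ} (hξ : ξ ^ m = 1) (d : ℕ) :
    ∏ j ∈ Finset.range (m * d), g (ξ ^ j) = (∏ j ∈ Finset.range m, g (ξ ^ j)) ^ d := by
  induction d with
  | zero => simp
  | succ d ih =>
    rw [Nat.mul_succ, Finset.prod_range_add, ih, pow_succ]
    congr 1
    refine Finset.prod_congr rfl fun j _ => ?_
    rw [pow_add, pow_mul, hξ, one_pow, one_mul]

lemma prodPrimRootLinear {m : ℕ} (hm : 0 < m) {ξ : ℂ} (hξ : IsPrimitiveRoot ξ m) (a : ℂ) :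
    ∏ j ∈ Finset.range m, (a * ξ ^ j - 1) = (-1) ^ (m + 1) * (a ^ m - 1) := by
  have h1 : ∏ j ∈ Finset.range m, (a * ξ ^ j - 1)
      = ∏ j ∈ Finset.range m, (-1 : ℂ) * ((1:ℂ) - ξ ^ j * a) :=
    Finset.prod_congr rfl fun j _ => by ring
  have h2 : ∏ j ∈ Finset.range m, ((1:ℂ) - ξ ^ j * a) = 1 ^ m - a ^ m := by
    rw [← prodNthRoots hm hξ (fun μ => 1 - μ * a)]
    exact (hξ.pow_sub_pow_eq_prod_sub_mul 1 a hm).symm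
  rw [h1, Finset.prod_mul_distrib, Finset.prod_const, h2, Finset.card_range, pow_succ]
  ring

lemma detSubAlgebraMap {k : ℕ} (M : Matrix (Fin k) (Fin k) ℂ) (c : ℂ) :
    Polynomial.eval c M.charpoly
      = (-1) ^ k * (M - algebraMap ℂ (Matrix (Fin k) (Fin k) ℂ) c).det := by
  have h1 : Polynomial.eval c M.charpoly
      = ((Matrix.charmatrix M).map (Polynomial.evalRingHom c)).det := by
    rw [Matrix.charpoly, ← Polynomial.coe_evalRingHom, RingHom.map_det, RingHom.mapMatrix_apply]
  have h2 : (Matrix.charmatrix M).map (Polynomial.evalRingHom c)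
      = algebraMap ℂ (Matrix (Fin k) (Fin k) ℂ) c - M := by
    ext i j
    simp [Matrix.charmatrix_apply, Matrix.map_apply, Matrix.sub_apply,
      Matrix.algebraMap_matrix_apply, Matrix.diagonal_apply]
    split_ifs <;> simp
  have h3 : M - algebraMap ℂ (Matrix (Fin k) (Fin k) ℂ) c
      = -(algebraMap ℂ (Matrix (Fin k) (Fin k) ℂ) c - M) := (neg_sub _ _).symm
  rw [h1, h2, h3, Matrix.det_neg]
  simp [← mul_assoc, ← mul_pow]

lemma rootMultiplicityFinsetProd {α : Type*} [DecidableEq α] (s : Finset α) (p : α → ℂ[X])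
    (h : ∏ a ∈ s, p a ≠ 0) (x : ℂ) :
    Polynomial.rootMultiplicity x (∏ a ∈ s, p a) = ∑ a ∈ s, Polynomial.rootMultiplicity x (p a) := by
  induction s using Finset.induction with
  | empty =>
    rw [Finset.prod_empty, Finset.sum_empty, ← map_one (C : ℂ →+* ℂ[X]), Polynomial.rootMultiplicity_C]
  | @insert a s ha ih =>
    rw [Finset.prod_insert ha] at h ⊢
    rw [Polynomial.rootMultiplicity_mul h, ih (right_ne_zero_of_mul h), Finset.sum_insert ha]

lemma rootMultiplicityPow {p : ℂ[X]} (hp : p ≠ 0) (d : ℕ) (x : ℂ) :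
    Polynomial.rootMultiplicity x (p ^ d) = d * Polynomial.rootMultiplicity x p := by
  induction d with
  | zero =>
    rw [pow_zero, ← map_one (C : ℂ →+* ℂ[X]), Polynomial.rootMultiplicity_C, Nat.zero_mul]
  | succ d ih =>
    rw [pow_succ, Polynomial.rootMultiplicity_mul (mul_ne_zero (pow_ne_zero _ hp) hp), ih]
    ring

lemma rootMultiplicityXPowSubOne {e : ℕ} (he : 0 < e) :
    Polynomial.rootMultiplicity (1 : ℂ) ((X : ℂ[X]) ^ e - 1) = 1 := by
  have hne : ((X : ℂ[X]) ^ e - 1) ≠ 0 := fun h => by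
    have := congrArg (Polynomial.eval 0) h
    simp [zero_pow he.ne'] at this
  have hgeom : ((X : ℂ[X]) ^ e - 1) = (∑ i ∈ Finset.range e, (X : ℂ[X]) ^ i) * (X - 1) :=
    (geom_sum_mul _ e).symm
  rw [hgeom] at hne ⊢
  rw [Polynomial.rootMultiplicity_mul hne]
  have h1 : Polynomial.rootMultiplicity (1 : ℂ) (∑ i ∈ Finset.range e, (X : ℂ[X]) ^ i) = 0 := by
    apply Polynomial.rootMultiplicity_eq_zero
    simp only [Polynomial.IsRoot, Polynomial.eval_finset_sum, Polynomial.eval_pow,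
      Polynomial.eval_X, one_pow, Finset.sum_const, Finset.card_range, nsmul_eq_mul, mul_one]
    exact_mod_cast he.ne'
  have h2 : Polynomial.rootMultiplicity (1 : ℂ) ((X : ℂ[X]) - 1) = 1 := by
    simpa using Polynomial.rootMultiplicity_X_sub_C_self (x := (1 : ℂ))
  rw [h1, h2]
lemma detSubAlgebraMap' {k : ℕ} (M : Matrix (Fin k) (Fin k) ℂ) (c : ℂ) :
    (M - algebraMap ℂ (Matrix (Fin k) (Fin k) ℂ) c).det
      = (-1) ^ k * Polynomial.eval c M.charpoly := by
  rw [detSubAlgebraMap M c, ← mul_assoc, ← mul_pow]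
  simp

theorem charpoly_pow_rootMultiplicity_one
    (n g : ℕ) (A : Matrix (Fin n) (Fin n) ℂ) (f : Fin g → ℕ)
    (hf : ∀ i, 0 < f i)
    (hA : A.charpoly = ∏ i, ((X : ℂ[X]) ^ f i - 1)) :
    ∀ N : ℕ, 0 < N →
      ((A ^ N).charpoly).rootMultiplicity 1 = ∑ i, Nat.gcd (f i) N := by
  intro N hN
  obtain ⟨ζ, hζ⟩ : ∃ ζ : ℂ, IsPrimitiveRoot ζ N := ⟨_, Complex.isPrimitiveRoot_exp N hN.ne'⟩
  set d : Fin g → ℕ := fun i => Nat.gcd (f i) N with hd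
  set m : Fin g → ℕ := fun i => N / d i with hmdef
  set e : Fin g → ℕ := fun i => f i / d i with hedef
  have hd_pos : ∀ i, 0 < d i := fun i => Nat.gcd_pos_of_pos_left N (hf i)
  have hdN : ∀ i, d i ∣ N := fun i => Nat.gcd_dvd_right _ _
  have hdf : ∀ i, d i ∣ f i := fun i => Nat.gcd_dvd_left _ _
  have hm_mul : ∀ i, m i * d i = N := fun i => Nat.div_mul_cancel (hdN i)
  have hm_pos : ∀ i, 0 < m i := fun i => Nat.div_pos (Nat.le_of_dvd hN (hdN i)) (hd_pos i)
  have he_pos : ∀ i, 0 < e i := fun i => Nat.div_pos (Nat.le_of_dvd (hf i) (hdf i)) (hd_pos i)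
  have hde : ∀ i, d i * e i = f i := fun i => Nat.mul_div_cancel' (hdf i)
  have hfm : ∀ i, f i * m i = e i * N := by
    intro i
    calc f i * m i = d i * e i * m i := by rw [hde]
    _ = e i * (m i * d i) := by ring
    _ = e i * N := by rw [hm_mul]
  have hξ : ∀ i, IsPrimitiveRoot (ζ ^ f i) (m i) := by
    intro i
    have h1 : IsPrimitiveRoot (ζ ^ d i) (m i) := hζ.pow hN (by rw [mul_comm, hm_mul])
    have h2 : ζ ^ f i = (ζ ^ d i) ^ e i := by rw [← pow_mul, hde]
    rw [h2]
    exact h1.pow_of_coprime (e i) (Nat.coprime_div_gcd_div_gcd (hd_pos i))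
  set c : ℂ := (-1) ^ (n * (N + 1)) * ∏ i, (-1 : ℂ) ^ ((m i + 1) * d i) with hc
  have heval : ∀ w : ℂ, Polynomial.eval (w ^ N) ((A ^ N).charpoly)
      = c * ∏ i, ((w ^ N) ^ e i - 1) ^ d i := by
    intro w
    have hpoly : (X : ℂ[X]) ^ N - C (w ^ N) = ∏ j ∈ Finset.range N, (X - C (ζ ^ j * w)) := by
      apply Polynomial.funext
      intro y
      rw [eval_prod]
      simp only [eval_sub, eval_pow, eval_X, eval_C]
      rw [← prodNthRoots hN hζ (fun μ => y - μ * w)]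
      exact hζ.pow_sub_pow_eq_prod_sub_mul y w hN
    have hsplit : (A ^ N - algebraMap ℂ (Matrix (Fin n) (Fin n) ℂ) (w ^ N)).det
        = ∏ j ∈ Finset.range N,
          (A - algebraMap ℂ (Matrix (Fin n) (Fin n) ℂ) (ζ ^ j * w)).det := by
      have h0 : A ^ N - algebraMap ℂ (Matrix (Fin n) (Fin n) ℂ) (w ^ N)
          = Polynomial.aeval A ((X : ℂ[X]) ^ N - C (w ^ N)) := by simp
      let φ : ℂ[X] →* ℂ := Matrix.detMonoidHom.comp
        ((Polynomial.aeval A : ℂ[X] →ₐ[ℂ] Matrix (Fin n) (Fin n) ℂ) :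
          ℂ[X] →+* Matrix (Fin n) (Fin n) ℂ).toMonoidHom
      have hφ : ∀ p : ℂ[X], φ p = (Polynomial.aeval A p).det := fun p => rfl
      rw [h0, ← hφ, hpoly, map_prod]
      refine Finset.prod_congr rfl fun j _ => ?_
      rw [hφ]
      simp
    calc Polynomial.eval (w ^ N) ((A ^ N).charpoly)
        = (-1) ^ n * (A ^ N - algebraMap ℂ (Matrix (Fin n) (Fin n) ℂ) (w ^ N)).det :=
          detSubAlgebraMap _ _
      _ = (-1) ^ n * ∏ j ∈ Finset.range N,
            (A - algebraMap ℂ (Matrix (Fin n) (Fin n) ℂ) (ζ ^ j * w)).det := by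
          rw [hsplit]
      _ = (-1) ^ n * ∏ j ∈ Finset.range N,
            ((-1 : ℂ) ^ n * Polynomial.eval (ζ ^ j * w) A.charpoly) := by
          rw [Finset.prod_congr rfl fun j _ => detSubAlgebraMap' A (ζ ^ j * w)]
      _ = (-1) ^ (n * (N + 1)) * ∏ j ∈ Finset.range N,
            Polynomial.eval (ζ ^ j * w) A.charpoly := by
          rw [Finset.prod_mul_distrib, Finset.prod_const, Finset.card_range, ← mul_assoc,
            ← pow_mul, ← pow_add]
          ring_nf
      _ = (-1) ^ (n * (N + 1)) * ∏ j ∈ Finset.range N, ∏ i, ((ζ ^ j * w) ^ f i - 1) := by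
          congr 1
          refine Finset.prod_congr rfl fun j _ => ?_
          simp [hA, eval_prod]
      _ = (-1) ^ (n * (N + 1)) * ∏ i, ∏ j ∈ Finset.range N, (w ^ f i * (ζ ^ f i) ^ j - 1) := by
          rw [Finset.prod_comm]
          congr 1
          refine Finset.prod_congr rfl fun i _ => Finset.prod_congr rfl fun j _ => ?_
          rw [mul_pow, ← pow_mul, mul_comm j (f i), pow_mul, mul_comm]
      _ = (-1) ^ (n * (N + 1)) * ∏ i,
            ((-1 : ℂ) ^ (m i + 1) * ((w ^ f i) ^ m i - 1)) ^ d i := by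
          congr 1
          refine Finset.prod_congr rfl fun i _ => ?_
          rw [← hm_mul i,
            prodPowPeriodic (fun a => w ^ f i * a - 1) (ζ ^ f i) (hξ i).pow_eq_one (d i),
            prodPrimRootLinear (hm_pos i) (hξ i) (w ^ f i)]
      _ = c * ∏ i, ((w ^ N) ^ e i - 1) ^ d i := by
          rw [hc, mul_assoc, ← Finset.prod_mul_distrib]
          congr 1
          refine Finset.prod_congr rfl fun i _ => ?_
          rw [mul_pow, ← pow_mul, ← pow_mul, hfm i, mul_comm (e i) N, pow_mul w N (e i)]
  have hR : (A ^ N).charpoly = C c * ∏ i, ((X : ℂ[X]) ^ e i - 1) ^ d i := by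
    apply Polynomial.funext
    intro z
    obtain ⟨w, rfl⟩ := IsAlgClosed.exists_pow_nat_eq z hN
    rw [heval w]
    simp [eval_prod]
  have hch : (A ^ N).charpoly ≠ 0 := (Matrix.charpoly_monic (A ^ N)).ne_zero
  have hne : C c * ∏ i, ((X : ℂ[X]) ^ e i - 1) ^ d i ≠ 0 := hR ▸ hch
  rw [hR, Polynomial.rootMultiplicity_mul hne, Polynomial.rootMultiplicity_C, zero_add,
    rootMultiplicityFinsetProd Finset.univ _ (right_ne_zero_of_mul hne) 1]
  have hfac : ∀ i : Fin g, ((X : ℂ[X]) ^ e i - 1) ≠ 0 := by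
    intro i h
    have := congrArg (Polynomial.eval 0) h
    simp [zero_pow (he_pos i).ne'] at this
  refine Finset.sum_congr rfl fun i _ => ?_
  rw [rootMultiplicityPow (hfac i), rootMultiplicityXPowSubOne (he_pos i), mul_one]
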